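/- For integers k ≥ 1 and n ≥ 1, the number of compositions of n with all parts congruent to 1 modulo k equals the number of compositions of n + k - 1 with all parts at least k. -/
import Mathlib

def bumpHead (j : ℕ) : List ℕ → List ℕ
  | [] => []
  | c :: t => (c + j) :: t

/-- Forward map of Munagi's bijection, on lists of parts. -/
def munagiF (k : ℕ) : List ℕ → List ℕ
  | [] => []
  | a :: rest =>
    if a = 1 then
      match rest with
      | [] => [k]
      | x :: t => bumpHead 1 (munagiF k (x :: t))
    else if _h : k = 0 ∨ a ≤ k then []
    else k :: munagiF k ((a - k) :: rest)
termination_by l => l.sum + l.length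
decreasing_by
  all_goals (simp_wf; omega)

/-- Inverse map of Munagi's bijection, on lists of parts. -/
def munagiG (k : ℕ) : List ℕ → List ℕ
  | [] => []
  | c :: rest =>
    if c = k then
      match rest with
      | [] => [1]
      | x :: t => bumpHead k (munagiG k (x :: t))
    else if _h : c ≤ k then []
    else 1 :: munagiG k ((c - 1) :: rest)
termination_by l => l.sum + l.length
decreasing_by
  all_goals (simp_wf; omega)

lemma munagiF_one_nil (k : ℕ) : munagiF k [1] = [k] := by
  rw [munagiF.eq_def]; simp

lemma munagiF_one_cons (k x : ℕ) (t : List ℕ) :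
    munagiF k (1 :: x :: t) = bumpHead 1 (munagiF k (x :: t)) := by
  rw [munagiF.eq_def]; simp

lemma munagiF_big (k a : ℕ) (rest : List ℕ) (hk : 1 ≤ k) (ha : k < a) :
    munagiF k (a :: rest) = k :: munagiF k ((a - k) :: rest) := by
  rw [munagiF.eq_def]
  have h1 : a ≠ 1 := by omega
  have h2 : ¬ (k = 0 ∨ a ≤ k) := by omega
  simp [h1, h2]

lemma munagiG_k_nil (k : ℕ) : munagiG k [k] = [1] := by
  rw [munagiG.eq_def]; simp

lemma munagiG_k_cons (k x : ℕ) (t : List ℕ) :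
    munagiG k (k :: x :: t) = bumpHead k (munagiG k (x :: t)) := by
  rw [munagiG.eq_def]; simp

lemma munagiG_big (k c : ℕ) (rest : List ℕ) (hc : k < c) :
    munagiG k (c :: rest) = 1 :: munagiG k ((c - 1) :: rest) := by
  rw [munagiG.eq_def]
  have h1 : c ≠ k := by omega
  have h2 : ¬ c ≤ k := by omega
  simp [h1, h2]

lemma ge_of_modeq (k a : ℕ) (hk : 1 ≤ k) (ha : a % k = 1 % k) (hpos : 0 < a)
    (hne : a ≠ 1) : k + 1 ≤ a := by
  rcases eq_or_lt_of_le hk with h1 | h2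
  · omega
  · by_contra h
    push_neg at h
    have h1k : 1 % k = 1 := Nat.mod_eq_of_lt h2
    rcases lt_or_eq_of_le (by omega : a ≤ k) with hlt | heq
    · rw [Nat.mod_eq_of_lt hlt] at ha; omega
    · subst heq; rw [Nat.mod_self] at ha; omega

lemma sub_modeq (k a : ℕ) (hka : k ≤ a) (ha : a % k = 1 % k) :
    (a - k) % k = 1 % k := by
  have h : a - k + k = a := Nat.sub_add_cancel hka
  rw [← Nat.add_mod_right (a - k) k, h]; exact ha

lemma munagiF_spec (k : ℕ) (hk : 1 ≤ k) :
    ∀ (N : ℕ) (l : List ℕ), l.sum + l.length ≤ N → l ≠ [] →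
      (∀ x ∈ l, 0 < x) → (∀ x ∈ l, x % k = 1 % k) →
      munagiF k l ≠ [] ∧ (∀ x ∈ munagiF k l, k ≤ x) ∧
        (munagiF k l).sum + 1 = l.sum + k := by
  intro N
  induction N with
  | zero =>
    intro l hN hne _ _
    cases l with
    | nil => exact absurd rfl hne
    | cons a rest => simp at hN
  | succ N ih =>
    intro l hN hne hpos hmod
    cases l with
    | nil => exact absurd rfl hne
    | cons a rest =>
      by_cases ha : a = 1
      · subst ha
        cases rest with
        | nil => rw [munagiF_one_nil]; simp; omega
        | cons x t =>
          obtain ⟨h1, h2, h3⟩ := ih (x :: t) (by simp at hN ⊢; omega) (by simp)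
            (fun y hy => hpos y (by simp [hy])) (fun y hy => hmod y (by simp [hy]))
          rw [munagiF_one_cons]
          cases hF : munagiF k (x :: t) with
          | nil => exact absurd hF h1
          | cons c t' =>
            rw [hF] at h2 h3
            refine ⟨by simp [bumpHead], ?_, ?_⟩
            · intro y hy
              simp [bumpHead] at hy
              rcases hy with hy | hy
              · have := h2 c (by simp); omega
              · exact h2 y (by simp [hy])
            · simp [bumpHead] at h3 ⊢; omega
      · have hak : k + 1 ≤ a :=
          ge_of_modeq k a hk (hmod a (by simp)) (hpos a (by simp)) ha
        rw [munagiF_big k a rest hk (by omega)]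
        obtain ⟨h1, h2, h3⟩ := ih ((a - k) :: rest) (by simp at hN ⊢; omega) (by simp)
          (by intro y hy
              simp at hy
              rcases hy with hy | hy
              · omega
              · exact hpos y (by simp [hy]))
          (by intro y hy
              simp at hy
              rcases hy with hy | hy
              · subst hy; exact sub_modeq k a (by omega) (hmod a (by simp))
              · exact hmod y (by simp [hy]))
        refine ⟨by simp, ?_, ?_⟩
        · intro y hy
          simp at hy
          rcases hy with hy | hy
          · omega
          · exact h2 y hy
        · simp at h3 ⊢; omega

lemma munagiG_spec (k : ℕ) (hk : 1 ≤ k) :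
    ∀ (N : ℕ) (l : List ℕ), l.sum + l.length ≤ N → l ≠ [] →
      (∀ x ∈ l, k ≤ x) →
      munagiG k l ≠ [] ∧ (∀ x ∈ munagiG k l, 0 < x ∧ x % k = 1 % k) ∧
        (munagiG k l).sum + k = l.sum + 1 := by
  intro N
  induction N with
  | zero =>
    intro l hN hne _
    cases l with
    | nil => exact absurd rfl hne
    | cons a rest => simp at hN
  | succ N ih =>
    intro l hN hne hge
    cases l with
    | nil => exact absurd rfl hne
    | cons c rest =>
      by_cases hc : c = k
      · subst hc
        cases rest with
        | nil => rw [munagiG_k_nil]; simp; omega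
        | cons x t =>
          obtain ⟨h1, h2, h3⟩ := ih (x :: t) (by simp at hN ⊢; omega) (by simp)
            (fun y hy => hge y (by simp [hy]))
          rw [munagiG_k_cons]
          cases hG : munagiG c (x :: t) with
          | nil => exact absurd hG h1
          | cons a t' =>
            rw [hG] at h2 h3
            refine ⟨by simp [bumpHead], ?_, ?_⟩
            · intro y hy
              simp [bumpHead] at hy
              rcases hy with hy | hy
              · obtain ⟨hp, hm⟩ := h2 a (by simp)
                subst hy
                exact ⟨by omega, by rw [Nat.add_mod_right]; exact hm⟩
              · exact h2 y (by simp [hy])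
            · simp [bumpHead] at h3 ⊢; omega
      · have hck : k < c := lt_of_le_of_ne (hge c (by simp)) (Ne.symm hc)
        rw [munagiG_big k c rest hck]
        obtain ⟨h1, h2, h3⟩ := ih ((c - 1) :: rest) (by simp at hN ⊢; omega) (by simp)
          (by intro y hy
              simp at hy
              rcases hy with hy | hy
              · omega
              · exact hge y (by simp [hy]))
        refine ⟨by simp, ?_, ?_⟩
        · intro y hy
          simp at hy
          rcases hy with hy | hy
          · subst hy; exact ⟨by omega, rfl⟩
          · exact h2 y hy
        · simp at h3 ⊢; omega

lemma munagiGF (k : ℕ) (hk : 1 ≤ k) :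
    ∀ (N : ℕ) (l : List ℕ), l.sum + l.length ≤ N → l ≠ [] →
      (∀ x ∈ l, 0 < x) → (∀ x ∈ l, x % k = 1 % k) →
      munagiG k (munagiF k l) = l := by
  intro N
  induction N with
  | zero =>
    intro l hN hne _ _
    cases l with
    | nil => exact absurd rfl hne
    | cons a rest => simp at hN
  | succ N ih =>
    intro l hN hne hpos hmod
    cases l with
    | nil => exact absurd rfl hne
    | cons a rest =>
      by_cases ha : a = 1
      · subst ha
        cases rest with
        | nil => rw [munagiF_one_nil, munagiG_k_nil]
        | cons x t =>
          have hrest_pos : ∀ y ∈ x :: t, 0 < y := fun y hy => hpos y (by simp [hy])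
          have hrest_mod : ∀ y ∈ x :: t, y % k = 1 % k := fun y hy => hmod y (by simp [hy])
          have hNr : (x :: t).sum + (x :: t).length ≤ N := by simp at hN ⊢; omega
          obtain ⟨h1, h2, _⟩ := munagiF_spec k hk N (x :: t) hNr (by simp) hrest_pos hrest_mod
          have hIH := ih (x :: t) hNr (by simp) hrest_pos hrest_mod
          rw [munagiF_one_cons]
          cases hF : munagiF k (x :: t) with
          | nil => exact absurd hF h1
          | cons c t' =>
            have hck : k ≤ c := h2 c (by rw [hF]; simp)
            show munagiG k ((c + 1) :: t') = 1 :: x :: t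
            rw [munagiG_big k (c + 1) t' (by omega)]
            have : c + 1 - 1 = c := by omega
            rw [this, ← hF, hIH]
      · have hak : k + 1 ≤ a :=
          ge_of_modeq k a hk (hmod a (by simp)) (hpos a (by simp)) ha
        rw [munagiF_big k a rest hk (by omega)]
        have hpos' : ∀ y ∈ (a - k) :: rest, 0 < y := by
          intro y hy; simp at hy
          rcases hy with hy | hy
          · omega
          · exact hpos y (by simp [hy])
        have hmod' : ∀ y ∈ (a - k) :: rest, y % k = 1 % k := by
          intro y hy; simp at hy
          rcases hy with hy | hy
          · subst hy; exact sub_modeq k a (by omega) (hmod a (by simp))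
          · exact hmod y (by simp [hy])
        have hNr : ((a - k) :: rest).sum + ((a - k) :: rest).length ≤ N := by
          simp at hN ⊢; omega
        obtain ⟨h1, _, _⟩ := munagiF_spec k hk N ((a - k) :: rest) hNr (by simp) hpos' hmod'
        have hIH := ih ((a - k) :: rest) hNr (by simp) hpos' hmod'
        cases hF : munagiF k ((a - k) :: rest) with
        | nil => exact absurd hF h1
        | cons c t' =>
          rw [munagiG_k_cons, ← hF, hIH]
          simp [bumpHead]
          omega

lemma munagiFG (k : ℕ) (hk : 1 ≤ k) :
    ∀ (N : ℕ) (l : List ℕ), l.sum + l.length ≤ N → l ≠ [] →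
      (∀ x ∈ l, k ≤ x) →
      munagiF k (munagiG k l) = l := by
  intro N
  induction N with
  | zero =>
    intro l hN hne _
    cases l with
    | nil => exact absurd rfl hne
    | cons a rest => simp at hN
  | succ N ih =>
    intro l hN hne hge
    cases l with
    | nil => exact absurd rfl hne
    | cons c rest =>
      by_cases hc : c = k
      · subst hc
        cases rest with
        | nil => rw [munagiG_k_nil, munagiF_one_nil]
        | cons x t =>
          have hrest_ge : ∀ y ∈ x :: t, c ≤ y := fun y hy => hge y (by simp [hy])
          have hNr : (x :: t).sum + (x :: t).length ≤ N := by simp at hN ⊢; omega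
          obtain ⟨h1, h2, _⟩ := munagiG_spec c hk N (x :: t) hNr (by simp) hrest_ge
          have hIH := ih (x :: t) hNr (by simp) hrest_ge
          rw [munagiG_k_cons]
          cases hG : munagiG c (x :: t) with
          | nil => exact absurd hG h1
          | cons a t' =>
            have hapos : 0 < a := (h2 a (by rw [hG]; simp)).1
            show munagiF c ((a + c) :: t') = c :: x :: t
            rw [munagiF_big c (a + c) t' hk (by omega)]
            have : a + c - c = a := by omega
            rw [this, ← hG, hIH]
      · have hck : k < c := lt_of_le_of_ne (hge c (by simp)) (Ne.symm hc)
        rw [munagiG_big k c rest hck]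
        have hge' : ∀ y ∈ (c - 1) :: rest, k ≤ y := by
          intro y hy; simp at hy
          rcases hy with hy | hy
          · omega
          · exact hge y (by simp [hy])
        have hNr : ((c - 1) :: rest).sum + ((c - 1) :: rest).length ≤ N := by
          simp at hN ⊢; omega
        obtain ⟨h1, _, _⟩ := munagiG_spec k hk N ((c - 1) :: rest) hNr (by simp) hge'
        have hIH := ih ((c - 1) :: rest) hNr (by simp) hge'
        cases hG : munagiG k ((c - 1) :: rest) with
        | nil => exact absurd hG h1
        | cons a t' =>
          rw [munagiF_one_cons, ← hG, hIH]
          simp [bumpHead]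
          omega

/-- Munagi's theorem: the number of compositions of `n` with all parts congruent to `1`
modulo `k` equals the number of compositions of `n + k - 1` with all parts at least `k`. -/
theorem compositions_one_mod_k_eq_compositions_ge_k (k n : ℕ) (hk : 1 ≤ k) (hn : 1 ≤ n) :
    Nat.card {c : Composition n // ∀ x ∈ c.blocks, x ≡ 1 [MOD k]} =
      Nat.card {c : Composition (n + k - 1) // ∀ x ∈ c.blocks, k ≤ x} := by
  apply Nat.card_congr
  have bne : ∀ (m : ℕ), 1 ≤ m → ∀ (c : Composition m), c.blocks ≠ [] := by
    intro m hm c hnil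
    have := c.blocks_sum
    rw [hnil] at this
    simp at this
    omega
  have Fspec : ∀ (c : Composition n), (∀ x ∈ c.blocks, x ≡ 1 [MOD k]) →
      munagiF k c.blocks ≠ [] ∧ (∀ x ∈ munagiF k c.blocks, k ≤ x) ∧
        (munagiF k c.blocks).sum + 1 = n + k := by
    intro c hc
    have h := munagiF_spec k hk (c.blocks.sum + c.blocks.length) c.blocks le_rfl
      (bne n hn c) (fun x hx => c.blocks_pos hx) (fun x hx => hc x hx)
    rw [c.blocks_sum] at h
    exact h
  have Gspec : ∀ (c : Composition (n + k - 1)), (∀ x ∈ c.blocks, k ≤ x) →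
      munagiG k c.blocks ≠ [] ∧
        (∀ x ∈ munagiG k c.blocks, 0 < x ∧ x % k = 1 % k) ∧
        (munagiG k c.blocks).sum + k = n + k := by
    intro c hc
    have h := munagiG_spec k hk (c.blocks.sum + c.blocks.length) c.blocks le_rfl
      (bne (n + k - 1) (by omega) c) hc
    rw [c.blocks_sum] at h
    refine ⟨h.1, h.2.1, ?_⟩
    rw [h.2.2]
    omega
  refine
    { toFun := fun c =>
        ⟨⟨munagiF k c.1.blocks,
          fun {i} hi => by have := (Fspec c.1 c.2).2.1 i hi; omega,
          by have := (Fspec c.1 c.2).2.2; omega⟩,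
          fun x hx => (Fspec c.1 c.2).2.1 x hx⟩
      invFun := fun c =>
        ⟨⟨munagiG k c.1.blocks,
          fun {i} hi => ((Gspec c.1 c.2).2.1 i hi).1,
          by have := (Gspec c.1 c.2).2.2; omega⟩,
          fun x hx => ((Gspec c.1 c.2).2.1 x hx).2⟩
      left_inv := fun c => ?_
      right_inv := fun c => ?_ }
  · apply Subtype.ext
    apply Composition.ext
    exact munagiGF k hk (c.1.blocks.sum + c.1.blocks.length) c.1.blocks le_rfl
      (bne n hn c.1) (fun x hx => c.1.blocks_pos hx) (fun x hx => c.2 x hx)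
  · apply Subtype.ext
    apply Composition.ext
    exact munagiFG k hk (c.1.blocks.sum + c.1.blocks.length) c.1.blocks le_rfl
      (bne (n + k - 1) (by omega) c.1) c.2
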